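/- Let E be a real Hilbert space, f : E → ℝ twice continuously differentiable, and L₀, L₁, L₂ ≥ 0. Assume: (i) ‖∇f(x)‖ ≤ L₀ for all x ∈ E; (ii) the gradient map x ↦ ∇f(x) is L₁-Lipschitz; (iii) the Hessian map x ↦ D(∇f)(x) is L₂-Lipschitz from E into the continuous linear maps E → E equipped with the operator norm. Then the map x ↦ (D(∇f)(x))(∇f(x)) — which is the gradient of the Hamiltonian H(x) = (1/2)·‖∇f(x)‖² — is (L₀·L₂ + L₁²)-Lipschitz; consequently H has (L₀·L₂ + L₁²)-Lipschitz gradient. -/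
import Mathlib

theorem hamiltonian_gradient_lipschitz
    {E : Type*} [NormedAddCommGroup E] [InnerProductSpace ℝ E] [CompleteSpace E]
    (f : E → ℝ) (hf : ContDiff ℝ 2 f) (L₀ L₁ L₂ : ℝ)
    (hL₀ : 0 ≤ L₀) (hL₁ : 0 ≤ L₁) (hL₂ : 0 ≤ L₂)
    (hbound : ∀ x : E, ‖gradient f x‖ ≤ L₀)
    (hgradLip : ∀ x y : E, ‖gradient f x - gradient f y‖ ≤ L₁ * ‖x - y‖)
    (hhessLip : ∀ x y : E,
      ‖fderiv ℝ (gradient f) x - fderiv ℝ (gradient f) y‖ ≤ L₂ * ‖x - y‖) :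
    ∀ x y : E,
      ‖fderiv ℝ (gradient f) x (gradient f x) - fderiv ℝ (gradient f) y (gradient f y)‖
        ≤ (L₀ * L₂ + L₁ ^ 2) * ‖x - y‖ := by
  intro x y
  have hAy : ‖fderiv ℝ (gradient f) y‖ ≤ L₁ :=
    norm_fderiv_le_of_lip' ℝ hL₁ (Filter.Eventually.of_forall fun z => hgradLip z y)
  calc ‖fderiv ℝ (gradient f) x (gradient f x) - fderiv ℝ (gradient f) y (gradient f y)‖
      = ‖(fderiv ℝ (gradient f) x - fderiv ℝ (gradient f) y) (gradient f x)
          + fderiv ℝ (gradient f) y (gradient f x - gradient f y)‖ := by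
        simp [map_sub]
    _ ≤ ‖(fderiv ℝ (gradient f) x - fderiv ℝ (gradient f) y) (gradient f x)‖
          + ‖fderiv ℝ (gradient f) y (gradient f x - gradient f y)‖ := norm_add_le _ _
    _ ≤ ‖fderiv ℝ (gradient f) x - fderiv ℝ (gradient f) y‖ * ‖gradient f x‖
          + ‖fderiv ℝ (gradient f) y‖ * ‖gradient f x - gradient f y‖ := by
        gcongr <;> exact ContinuousLinearMap.le_opNorm _ _
    _ ≤ (L₂ * ‖x - y‖) * L₀ + L₁ * (L₁ * ‖x - y‖) := by
        gcongr <;> first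
          | exact hhessLip x y | exact hbound x | exact hAy | exact hgradLip x y
          | positivity
    _ = (L₀ * L₂ + L₁ ^ 2) * ‖x - y‖ := by ring
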